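/- Let P and Q be coprime positive integers. Then the set C = {(⌊tP⌋, ⌊tQ⌋) : t ∈ [0,1)} ⊆ ℤ² has exactly P + Q − 1 elements. -/
import Mathlib


theorem card_floor_set (P Q : ℕ) (hP : 0 < P) (hQ : 0 < Q)
    (hcop : Nat.Coprime P Q) :
    ({p : ℤ × ℤ | ∃ t : ℝ, 0 ≤ t ∧ t < 1 ∧ p = (⌊t * P⌋, ⌊t * Q⌋)}).ncard
      = P + Q - 1 := by
  have hPR : (0:ℝ) < P := by exact_mod_cast hP
  have hQR : (0:ℝ) < Q := by exact_mod_cast hQ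
  have hPZ : (0:ℤ) < P := by exact_mod_cast hP
  have hQZ : (0:ℤ) < Q := by exact_mod_cast hQ
  have hset : {p : ℤ × ℤ | ∃ t : ℝ, 0 ≤ t ∧ t < 1 ∧ p = (⌊t * P⌋, ⌊t * Q⌋)}
      = {p : ℤ × ℤ | 0 ≤ p.1 ∧ p.1 < P ∧ 0 ≤ p.2 ∧ p.2 < Q ∧
          -(Q:ℤ) < p.1 * Q - p.2 * P ∧ p.1 * Q - p.2 * P < P} := by
    ext ⟨a, b⟩
    simp only [Set.mem_setOf_eq, Prod.mk.injEq, Prod.ext_iff]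
    constructor
    · rintro ⟨t, ht0, ht1, ha, hb⟩
      subst ha; subst hb
      have h1 : (⌊t * P⌋ : ℝ) ≤ t * P := Int.floor_le _
      have h2 : t * P - 1 < ⌊t * P⌋ := Int.sub_one_lt_floor _
      have h3 : (⌊t * Q⌋ : ℝ) ≤ t * Q := Int.floor_le _
      have h4 : t * Q - 1 < ⌊t * Q⌋ := Int.sub_one_lt_floor _
      refine ⟨Int.floor_nonneg.mpr (by positivity), ?_, Int.floor_nonneg.mpr (by positivity),
        ?_, ?_, ?_⟩
      · exact Int.floor_lt.mpr (by push_cast; nlinarith)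
      · exact Int.floor_lt.mpr (by push_cast; nlinarith)
      · have : -(Q:ℝ) < (⌊t*P⌋:ℝ) * Q - (⌊t*Q⌋:ℝ) * P := by nlinarith
        exact_mod_cast this
      · have : (⌊t*P⌋:ℝ) * Q - (⌊t*Q⌋:ℝ) * P < P := by nlinarith
        exact_mod_cast this
    · rintro ⟨ha0, haP, hb0, hbQ, h1, h2⟩
      have ha0R : (0:ℝ) ≤ a := by exact_mod_cast ha0
      have haPR : (a:ℝ) < P := by exact_mod_cast haP
      have hb0R : (0:ℝ) ≤ b := by exact_mod_cast hb0
      have hbQR : (b:ℝ) < Q := by exact_mod_cast hbQ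
      have h1R : -(Q:ℝ) < (a:ℝ) * Q - (b:ℝ) * P := by exact_mod_cast h1
      have h2R : (a:ℝ) * Q - (b:ℝ) * P < P := by exact_mod_cast h2
      refine ⟨max ((a:ℝ)/P) ((b:ℝ)/Q), le_max_of_le_left (by positivity), ?_, ?_, ?_⟩
      · exact max_lt ((div_lt_one hPR).mpr haPR) ((div_lt_one hQR).mpr hbQR)
      · symm
        rw [Int.floor_eq_iff]
        constructor
        · calc (a:ℝ) = ((a:ℝ)/P)*P := by field_simp
            _ ≤ _ := mul_le_mul_of_nonneg_right (le_max_left _ _) hPR.le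
        · rcases max_cases ((a:ℝ)/P) ((b:ℝ)/Q) with ⟨hm, _⟩ | ⟨hm, _⟩ <;> rw [hm]
          · rw [div_mul_cancel₀ _ hPR.ne']; push_cast; linarith
          · rw [div_mul_eq_mul_div, div_lt_iff₀ hQR]; push_cast; nlinarith
      · symm
        rw [Int.floor_eq_iff]
        constructor
        · calc (b:ℝ) = ((b:ℝ)/Q)*Q := by field_simp
            _ ≤ _ := mul_le_mul_of_nonneg_right (le_max_right _ _) hQR.le
        · rcases max_cases ((a:ℝ)/P) ((b:ℝ)/Q) with ⟨hm, _⟩ | ⟨hm, _⟩ <;> rw [hm]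
          · rw [div_mul_eq_mul_div, div_lt_iff₀ hPR]; push_cast; nlinarith
          · rw [div_mul_cancel₀ _ hQR.ne']; push_cast; linarith
  rw [hset]
  have hinj : Set.InjOn (fun p : ℤ × ℤ => p.1 * Q - p.2 * P)
      {p : ℤ × ℤ | 0 ≤ p.1 ∧ p.1 < P ∧ 0 ≤ p.2 ∧ p.2 < Q ∧
          -(Q:ℤ) < p.1 * Q - p.2 * P ∧ p.1 * Q - p.2 * P < P} := by
    rintro ⟨a, b⟩ ⟨ha0, haP, hb0, hbQ, -, -⟩ ⟨a', b'⟩ ⟨ha0', haP', hb0', hbQ', -, -⟩ h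
    simp only at h
    have hco : IsCoprime (P:ℤ) (Q:ℤ) := by
      rw [Int.isCoprime_iff_gcd_eq_one]; exact_mod_cast hcop
    have hdvd : (P:ℤ) ∣ (a - a') * Q := ⟨b - b', by linarith [h]⟩
    obtain ⟨k, hk⟩ := hco.dvd_of_dvd_mul_right hdvd
    have hk1 : k < 1 := by nlinarith
    have hk2 : -1 < k := by nlinarith
    have hk0 : k = 0 := by omega
    have haa : a = a' := by rw [hk0, mul_zero] at hk; omega
    have hbb : b = b' := by
      have : b * (P:ℤ) = b' * P := by rw [haa] at h; linarith
      exact mul_right_cancel₀ hPZ.ne' this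
    exact Prod.ext haa hbb
  have himg : (fun p : ℤ × ℤ => p.1 * Q - p.2 * P) ''
      {p : ℤ × ℤ | 0 ≤ p.1 ∧ p.1 < P ∧ 0 ≤ p.2 ∧ p.2 < Q ∧
          -(Q:ℤ) < p.1 * Q - p.2 * P ∧ p.1 * Q - p.2 * P < P}
      = Set.Ioo (-(Q:ℤ)) (P:ℤ) := by
    ext v
    constructor
    · rintro ⟨⟨a, b⟩, ⟨-, -, -, -, h1, h2⟩, rfl⟩
      exact ⟨h1, h2⟩
    · rintro ⟨hv1, hv2⟩
      have hco : IsCoprime (Q:ℤ) (P:ℤ) := by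
        rw [Int.isCoprime_iff_gcd_eq_one, Int.gcd_comm]; exact_mod_cast hcop
      obtain ⟨u, w, huw⟩ := hco
      set a : ℤ := (v * u) % P with ha
      have ha0 : 0 ≤ a := Int.emod_nonneg _ hPZ.ne'
      have haP : a < P := Int.emod_lt_of_pos _ hPZ
      set k : ℤ := (v * u) / P with hkdef
      have hdef : a = v * u - P * k := by rw [ha, hkdef, Int.emod_def]
      set b : ℤ := -(v * w) - k * Q with hb
      have hab : a * Q - b * P = v := by
        rw [hdef, hb]; linear_combination v * huw
      have hb0 : 0 ≤ b := by
        by_contra hc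
        push_neg at hc
        have hb1 : b ≤ -1 := by omega
        nlinarith [mul_nonneg ha0 hQZ.le]
      have hbQ : b < Q := by
        have hbP : b * P < Q * P := by nlinarith
        exact lt_of_mul_lt_mul_right hbP hPZ.le
      refine ⟨(a, b), ⟨ha0, haP, hb0, hbQ, ?_, ?_⟩, hab⟩
      · rw [hab]; exact hv1
      · rw [hab]; exact hv2
  rw [← Set.ncard_image_of_injOn hinj, himg, ← Finset.coe_Ioo, Set.ncard_coe_finset,
    Int.card_Ioo]
  omega
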